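/- Mechanism 3 with parameter ε ∈ (0, 1/2) has social-cost approximation ratio at most (1/ε − 1)·(n − 1): for every profile x, its social cost is at most (1/ε − 1)·(n − 1)·OPT(x). -/

import Mathlib

noncomputable def cost2 (p : ℝ × ℝ) (y : ℝ) : ℝ := min |p.1 - y| |p.2 - y|

noncomputable def SC {n : ℕ} (p : ℝ × ℝ) (x : Fin n → ℝ) : ℝ := ∑ i, cost2 p (x i)

noncomputable def OPT {n : ℕ} (x : Fin n → ℝ) : ℝ :=
  sInf {c | ∃ l1 l2 : ℝ, c = SC (l1, l2) x}

/-- `p` is a possible output of Mechanism 3 with parameter `ε` and dictator `t`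
(extended to general profiles by translation and scaling).  With `x_l` the leftmost
location, `x_r` the rightmost and `L = x_r - x_l`: if `x_t` is within the first
`ε`-fraction, `l2 = x_t + max((2/ε - 2)(x_t - x_l), x_r - x_t)`; if within the last
`ε`-fraction, `l2 = x_t - max(x_t - x_l, (2/ε - 2)(x_r - x_t))`; otherwise `l2` is
an arbitrary point of `(-∞, x_l - L) ∪ (x_r + L, +∞)`. -/
def Mech3Out {n : ℕ} (ε : ℝ) (t : Fin n) (x : Fin n → ℝ) (p : ℝ × ℝ) : Prop :=
  let xl := Finset.univ.inf' ⟨t, Finset.mem_univ t⟩ x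
  let xr := Finset.univ.sup' ⟨t, Finset.mem_univ t⟩ x
  let L := xr - xl
  p.1 = x t ∧
  ((x t ≤ xl + ε * L ∧ p.2 = x t + max ((2 / ε - 2) * (x t - xl)) (xr - x t)) ∨
   (xl + (1 - ε) * L ≤ x t ∧ p.2 = x t - max (x t - xl) ((2 / ε - 2) * (xr - x t))) ∨
   (xl + ε * L < x t ∧ x t < xl + (1 - ε) * L ∧ (p.2 < xl - L ∨ xr + L < p.2)))

lemma cost2_nonneg (p : ℝ × ℝ) (y : ℝ) : 0 ≤ cost2 p y :=
  le_min (abs_nonneg _) (abs_nonneg _)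

lemma key3 (l1 l2 u v w : ℝ) (huv : u ≤ v) (hvw : v ≤ w) :
    min (v - u) (w - v) ≤ cost2 (l1, l2) u + cost2 (l1, l2) v + cost2 (l1, l2) w := by
  show min (v - u) (w - v) ≤ min |l1 - u| |l2 - u| + min |l1 - v| |l2 - v| + min |l1 - w| |l2 - w|
  rcases min_cases |l1 - u| |l2 - u| with ⟨eu, -⟩ | ⟨eu, -⟩ <;>
  rcases min_cases |l1 - v| |l2 - v| with ⟨ev, -⟩ | ⟨ev, -⟩ <;>
  rcases min_cases |l1 - w| |l2 - w| with ⟨ew, -⟩ | ⟨ew, -⟩ <;>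
  rw [eu, ev, ew] <;>
  linarith [min_le_left (v - u) (w - v), min_le_right (v - u) (w - v),
    le_abs_self (l1 - u), neg_le_abs (l1 - u), le_abs_self (l2 - u), neg_le_abs (l2 - u),
    le_abs_self (l1 - v), neg_le_abs (l1 - v), le_abs_self (l2 - v), neg_le_abs (l2 - v),
    le_abs_self (l1 - w), neg_le_abs (l1 - w), le_abs_self (l2 - w), neg_le_abs (l2 - w),
    abs_nonneg (l1 - u), abs_nonneg (l2 - u), abs_nonneg (l1 - v), abs_nonneg (l2 - v),
    abs_nonneg (l1 - w), abs_nonneg (l2 - w)]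

lemma OPT_nonneg {n : ℕ} (x : Fin n → ℝ) : 0 ≤ OPT x := by
  apply Real.sInf_nonneg
  rintro c ⟨l1, l2, rfl⟩
  exact Finset.sum_nonneg fun i _ => cost2_nonneg _ _

lemma OPT_ge3 {n : ℕ} (x : Fin n → ℝ) {j k m : Fin n} (hjk : j ≠ k) (hjm : j ≠ m)
    (hkm : k ≠ m) (h1 : x j ≤ x k) (h2 : x k ≤ x m) :
    min (x k - x j) (x m - x k) ≤ OPT x := by
  refine le_csInf ⟨SC (0, 0) x, 0, 0, rfl⟩ ?_
  rintro c ⟨l1, l2, rfl⟩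
  have hsum : ∑ i ∈ ({j, k, m} : Finset (Fin n)), cost2 (l1, l2) (x i) ≤ SC (l1, l2) x :=
    Finset.sum_le_sum_of_subset_of_nonneg (Finset.subset_univ _)
      (fun i _ _ => cost2_nonneg _ _)
  have hexp : ∑ i ∈ ({j, k, m} : Finset (Fin n)), cost2 (l1, l2) (x i)
      = cost2 (l1, l2) (x j) + cost2 (l1, l2) (x k) + cost2 (l1, l2) (x m) := by
    rw [Finset.sum_insert (by simp [hjk, hjm]), Finset.sum_insert (by simp [hkm]),
      Finset.sum_singleton]
    ring
  have hk := key3 l1 l2 (x j) (x k) (x m) h1 h2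
  rw [hexp] at hsum
  linarith

set_option maxHeartbeats 2000000 in
/-- Mechanism 3 has approximation ratio at most `(1/ε - 1)·(n - 1)`. -/
theorem stmt14 {n : ℕ} (ε : ℝ) (hε0 : 0 < ε) (hε1 : ε < 1 / 2)
    (t : Fin n) (x : Fin n → ℝ) (p : ℝ × ℝ) (hp : Mech3Out ε t x p) :
    SC p x ≤ (1 / ε - 1) * ((n : ℝ) - 1) * OPT x := by
  classical
  have h2e : (2 : ℝ) ≤ 1 / ε := by rw [le_div_iff₀ hε0]; linarith
  have hfac : (1 : ℝ) ≤ 1 / ε - 1 := by linarith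
  have hON : 0 ≤ OPT x := OPT_nonneg x
  obtain ⟨hp1, hcase⟩ := hp
  set xl := Finset.univ.inf' (⟨t, Finset.mem_univ t⟩ : (Finset.univ : Finset (Fin n)).Nonempty) x with hxldef
  set xr := Finset.univ.sup' (⟨t, Finset.mem_univ t⟩ : (Finset.univ : Finset (Fin n)).Nonempty) x with hxrdef
  have hxlle : ∀ i, xl ≤ x i := fun i => Finset.inf'_le x (Finset.mem_univ i)
  have hxrle : ∀ i, x i ≤ xr := fun i => Finset.le_sup' x (Finset.mem_univ i)
  obtain ⟨jmin, -, hjmin⟩ := Finset.exists_mem_eq_inf'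
    (⟨t, Finset.mem_univ t⟩ : (Finset.univ : Finset (Fin n)).Nonempty) x
  obtain ⟨jmax, -, hjmax⟩ := Finset.exists_mem_eq_sup'
    (⟨t, Finset.mem_univ t⟩ : (Finset.univ : Finset (Fin n)).Nonempty) x
  have hjmin' : xl = x jmin := hjmin
  have hjmax' : xr = x jmax := hjmax
  have hxlt : xl ≤ x t := hxlle t
  have hxrt : x t ≤ xr := hxrle t
  have hOPTmin : ∀ {j k m : Fin n}, x j < x k → x k < x m →
      min (x k - x j) (x m - x k) ≤ OPT x := by
    intro j k m h1 h2
    have hjk : j ≠ k := by rintro rfl; exact lt_irrefl _ h1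
    have hkm : k ≠ m := by rintro rfl; exact lt_irrefl _ h2
    have hjm : j ≠ m := by rintro rfl; exact lt_irrefl _ (h1.trans h2)
    exact OPT_ge3 x hjk hjm hkm h1.le h2.le
  -- per-agent bound
  have key : ∀ i, cost2 p (x i) ≤ (1 / ε - 1) * OPT x := by
    intro i
    have hxli : xl ≤ x i := hxlle i
    have hxri : x i ≤ xr := hxrle i
    have hc1 : cost2 p (x i) ≤ |x t - x i| := by
      simp only [cost2, hp1]; exact min_le_left _ _
    have hc2 : cost2 p (x i) ≤ |p.2 - x i| := min_le_right _ _
    have hRHS0 : 0 ≤ (1 / ε - 1) * OPT x := mul_nonneg (by linarith) hON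
    have hfacOPT : OPT x ≤ (1 / ε - 1) * OPT x := by nlinarith
    rcases hcase with ⟨hc, hl2⟩ | ⟨hc, hl2⟩ | ⟨hc1', hc2', -⟩
    · -- Case 1 : x t near the left end
      have ha1 : x t - xl ≤ ε * (xr - xl) := by linarith
      have haOPT : 0 < x t - xl → x t - xl ≤ OPT x := by
        intro ha
        have hL : 0 < xr - xl := by
          by_contra h; push_neg at h
          nlinarith [mul_nonpos_of_nonneg_of_nonpos hε0.le h]
        have htr : x t < xr := by nlinarith [mul_pos (show (0:ℝ) < 1 - ε by linarith) hL]
        have h1 : x jmin < x t := by rw [← hjmin']; linarith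
        have h2 : x t < x jmax := by rw [← hjmax']; exact htr
        have hm := hOPTmin h1 h2
        rw [← hjmin', ← hjmax'] at hm
        have hmin : min (x t - xl) (xr - x t) = x t - xl := min_eq_left (by
          nlinarith [mul_nonneg (show (0:ℝ) ≤ 1 - 2 * ε by linarith) hL.le])
        linarith [hmin ▸ hm]
      rcases le_or_gt (x i) (x t) with hik | hik
      · have e1 : |x t - x i| ≤ x t - xl := by
          rw [abs_of_nonneg (by linarith)]; linarith
        rcases le_or_gt (x t - xl) 0 with h0 | h0
        · linarith
        · linarith [haOPT h0]
      · rcases max_cases ((2 / ε - 2) * (x t - xl)) (xr - x t) with ⟨hm, hm2⟩ | ⟨hm, hm2⟩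
        · rw [hm] at hl2
          have e1 : |x t - x i| = x i - x t := by
            rw [abs_of_nonpos (by linarith)]; ring
          have hp2i : x i ≤ p.2 := by rw [hl2]; linarith
          have e2 : |p.2 - x i| = p.2 - x i := abs_of_nonneg (by linarith)
          have hmid : cost2 p (x i) ≤ (p.2 - x t) / 2 := by
            rw [e1] at hc1; rw [e2] at hc2; linarith
          have hval : (p.2 - x t) / 2 = (1 / ε - 1) * (x t - xl) := by rw [hl2]; ring
          rcases le_or_gt (x t - xl) 0 with h0 | h0
          · have : (1 / ε - 1) * (x t - xl) ≤ 0 :=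
              mul_nonpos_of_nonneg_of_nonpos (by linarith) h0
            linarith
          · have : (1 / ε - 1) * (x t - xl) ≤ (1 / ε - 1) * OPT x :=
              mul_le_mul_of_nonneg_left (haOPT h0) (by linarith)
            linarith
        · rw [hm] at hl2
          have hp2 : p.2 = xr := by rw [hl2]; ring
          have e1 : |x t - x i| = x i - x t := by
            rw [abs_of_nonpos (by linarith)]; ring
          have e2 : |p.2 - x i| = xr - x i := by
            rw [hp2, abs_of_nonneg (by linarith)]
          have hcm : cost2 p (x i) ≤ min (x i - x t) (xr - x i) := by
            refine le_min ?_ ?_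
            · rw [← e1]; exact hc1
            · rw [← e2]; exact hc2
          rcases le_or_gt (min (x i - x t) (xr - x i)) 0 with h0 | h0
          · linarith
          · have h1 : x t < x i := by
              have := min_le_left (x i - x t) (xr - x i); linarith
            have h2' : x i < xr := by
              have := min_le_right (x i - x t) (xr - x i); linarith
            have hm3 := hOPTmin (j := t) (k := i) (m := jmax) h1 (by rw [← hjmax']; exact h2')
            rw [← hjmax'] at hm3
            linarith
    · -- Case 2 : x t near the right end
      have hb1 : xr - x t ≤ ε * (xr - xl) := by linarith
      have hbOPT : 0 < xr - x t → xr - x t ≤ OPT x := by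
        intro hb
        have hL : 0 < xr - xl := by
          by_contra h; push_neg at h
          nlinarith [mul_nonpos_of_nonneg_of_nonpos hε0.le h]
        have htl : xl < x t := by nlinarith [mul_pos (show (0:ℝ) < 1 - ε by linarith) hL]
        have h1 : x jmin < x t := by rw [← hjmin']; exact htl
        have h2 : x t < x jmax := by rw [← hjmax']; linarith
        have hm := hOPTmin h1 h2
        rw [← hjmin', ← hjmax'] at hm
        have hmin : min (x t - xl) (xr - x t) = xr - x t := min_eq_right (by
          nlinarith [mul_nonneg (show (0:ℝ) ≤ 1 - 2 * ε by linarith) hL.le])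
        linarith [hmin ▸ hm]
      rcases le_or_gt (x t) (x i) with hik | hik
      · have e1 : |x t - x i| ≤ xr - x t := by
          rw [abs_of_nonpos (by linarith)]; linarith
        rcases le_or_gt (xr - x t) 0 with h0 | h0
        · linarith
        · linarith [hbOPT h0]
      · rcases max_cases (x t - xl) ((2 / ε - 2) * (xr - x t)) with ⟨hm, hm2⟩ | ⟨hm, hm2⟩
        · rw [hm] at hl2
          have hp2 : p.2 = xl := by rw [hl2]; ring
          have e1 : |x t - x i| = x t - x i := abs_of_nonneg (by linarith)
          have e2 : |p.2 - x i| = x i - xl := by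
            rw [hp2, abs_of_nonpos (by linarith)]; ring
          have hcm : cost2 p (x i) ≤ min (x t - x i) (x i - xl) := by
            refine le_min ?_ ?_
            · rw [← e1]; exact hc1
            · rw [← e2]; exact hc2
          rcases le_or_gt (min (x t - x i) (x i - xl)) 0 with h0 | h0
          · linarith
          · have h1 : xl < x i := by
              have := min_le_right (x t - x i) (x i - xl); linarith
            have h2' : x i < x t := by
              have := min_le_left (x t - x i) (x i - xl); linarith
            have hm3 := hOPTmin (j := jmin) (k := i) (m := t) (by rw [← hjmin']; exact h1) h2'
            rw [← hjmin'] at hm3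
            have : min (x i - xl) (x t - x i) ≤ OPT x := hm3
            rcases le_total (x t - x i) (x i - xl) with hmm | hmm
            · rw [min_eq_right hmm] at this
              have h4 : min (x t - x i) (x i - xl) = x t - x i := min_eq_left hmm
              linarith
            · rw [min_eq_left hmm] at this
              have h4 : min (x t - x i) (x i - xl) = x i - xl := min_eq_right hmm
              linarith
        · rw [hm] at hl2
          have e1 : |x t - x i| = x t - x i := abs_of_nonneg (by linarith)
          have hp2i : p.2 ≤ x i := by rw [hl2]; linarith
          have e2 : |p.2 - x i| = x i - p.2 := by
            rw [abs_of_nonpos (by linarith)]; ring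
          have hmid : cost2 p (x i) ≤ (x t - p.2) / 2 := by
            rw [e1] at hc1; rw [e2] at hc2; linarith
          have hval : (x t - p.2) / 2 = (1 / ε - 1) * (xr - x t) := by rw [hl2]; ring
          rcases le_or_gt (xr - x t) 0 with h0 | h0
          · have : (1 / ε - 1) * (xr - x t) ≤ 0 :=
              mul_nonpos_of_nonneg_of_nonpos (by linarith) h0
            linarith
          · have : (1 / ε - 1) * (xr - x t) ≤ (1 / ε - 1) * OPT x :=
              mul_le_mul_of_nonneg_left (hbOPT h0) (by linarith)
            linarith
    · -- Case 3 : x t in the middle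
      have hL : 0 < xr - xl := by
        by_contra h; push_neg at h
        have : (1 - ε) * (xr - xl) ≤ 0 :=
          mul_nonpos_of_nonneg_of_nonpos (by linarith) h
        linarith
      have hεL : 0 < ε * (xr - xl) := mul_pos hε0 hL
      have h1 : x jmin < x t := by rw [← hjmin']; linarith
      have h2 : x t < x jmax := by rw [← hjmax']; linarith
      have hm := hOPTmin h1 h2
      rw [← hjmin', ← hjmax'] at hm
      have hOg : ε * (xr - xl) ≤ OPT x := by
        have := le_min (show ε * (xr - xl) ≤ x t - xl by linarith)
          (show ε * (xr - xl) ≤ xr - x t by linarith)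
        linarith
      have hcost : cost2 p (x i) ≤ (1 - ε) * (xr - xl) := by
        rcases le_or_gt (x i) (x t) with hik | hik
        · have e1 : |x t - x i| = x t - x i := abs_of_nonneg (by linarith)
          rw [e1] at hc1; linarith
        · have e1 : |x t - x i| = x i - x t := by
            rw [abs_of_nonpos (by linarith)]; ring
          rw [e1] at hc1; linarith
      have hveq : (1 / ε - 1) * (ε * (xr - xl)) = (1 - ε) * (xr - xl) := by
        field_simp
      have : (1 / ε - 1) * (ε * (xr - xl)) ≤ (1 / ε - 1) * OPT x :=
        mul_le_mul_of_nonneg_left hOg (by linarith)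
      linarith
  -- summation
  have ht0 : cost2 p (x t) = 0 := by
    simp only [cost2, hp1, sub_self, abs_zero]
    exact min_eq_left (abs_nonneg _)
  have hn : 0 < n := t.pos
  have hcard : ((Finset.univ.erase t).card : ℝ) = (n : ℝ) - 1 := by
    rw [Finset.card_erase_of_mem (Finset.mem_univ t), Finset.card_univ, Fintype.card_fin,
      Nat.cast_sub hn, Nat.cast_one]
  calc SC p x = ∑ i ∈ Finset.univ.erase t, cost2 p (x i) + cost2 p (x t) :=
        (Finset.sum_erase_add _ _ (Finset.mem_univ t)).symm
    _ ≤ (Finset.univ.erase t).card • ((1 / ε - 1) * OPT x) + 0 :=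
        add_le_add (Finset.sum_le_card_nsmul _ _ _ fun i _ => key i) (le_of_eq ht0)
    _ = ((n : ℝ) - 1) * ((1 / ε - 1) * OPT x) := by
        rw [add_zero, nsmul_eq_mul, hcard]
    _ = (1 / ε - 1) * ((n : ℝ) - 1) * OPT x := by ring
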